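/- Let E be a finite-dimensional real inner product space and L : E → ℝ a differentiable function with finite infimum L* := inf L, which is ℓ-smooth (L(z′) ≤ L(z) + ⟨∇L(z), z′−z⟩ + (ℓ/2)‖z′−z‖² for all z,z′) and μ-PL (‖∇L(z)‖² ≥ 2μ(L(z) − L*) for all z) with 0 < μ ≤ ℓ. Let 0 < α ≤ 1/ℓ, let δ ≥ 0, and let (z^k) be any sequence satisfying z^{k+1} = z^k − α(∇L(z^k) + δ_k) with ‖δ_k‖ ≤ δ for all k. Then for every K ≥ 0: L(z^K) − L* ≤ (1 − αμ)^K (L(z⁰) − L*) + δ²/(2μ). -/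

import Mathlib

/-- **Linear convergence of inexact gradient descent up to a bias error ball
(telescoped estimate from the proof of Theorem 1).**
If `L` is `ℓ`-smooth and `μ`-PL with `0 < μ ≤ ℓ` and finite infimum `L* = ⨅ L`, and `(z k)`
follows `z^{k+1} = z^k - α(∇L(z^k) + δ_k)` with `0 < α ≤ 1/ℓ` and `‖δ_k‖ ≤ δ`, then for
every `K`, `L(z^K) - L* ≤ (1 - αμ)^K (L(z⁰) - L*) + δ²/(2μ)`. -/
theorem stmt_12 {E : Type*} [NormedAddCommGroup E] [InnerProductSpace ℝ E]
    [FiniteDimensional ℝ E]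
    (L : E → ℝ) (L' : E → E) (hgrad : ∀ z, HasGradientAt L (L' z) z)
    (hbdd : BddBelow (Set.range L))
    (ℓ μ : ℝ) (hμ : 0 < μ) (hμℓ : μ ≤ ℓ)
    (hsmooth : ∀ z z' : E,
      L z' ≤ L z + inner ℝ (L' z) (z' - z) + ℓ / 2 * ‖z' - z‖ ^ 2)
    (hPL : ∀ z : E, 2 * μ * (L z - ⨅ w : E, L w) ≤ ‖L' z‖ ^ 2)
    (α δ : ℝ) (hα : 0 < α) (hαℓ : α ≤ 1 / ℓ) (hδ : 0 ≤ δ)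
    (z : ℕ → E) (δseq : ℕ → E)
    (hstep : ∀ k, z (k + 1) = z k - α • (L' (z k) + δseq k))
    (hδseq : ∀ k, ‖δseq k‖ ≤ δ) :
    ∀ K : ℕ,
      L (z K) - (⨅ w : E, L w) ≤
        (1 - α * μ) ^ K * (L (z 0) - ⨅ w : E, L w) + δ ^ 2 / (2 * μ) := by
  set Lstar := ⨅ w : E, L w with hLstar
  have hℓ : 0 < ℓ := lt_of_lt_of_le hμ hμℓ
  have hαℓ' : α * ℓ ≤ 1 := by
    rw [le_div_iff₀ hℓ] at hαℓ; linarith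
  have hαμ : 0 ≤ 1 - α * μ := by nlinarith
  have hinf : ∀ w, Lstar ≤ L w := fun w => ciInf_le hbdd w
  -- one-step estimate
  have step : ∀ k, L (z (k + 1)) - Lstar ≤
      (1 - α * μ) * (L (z k) - Lstar) + α * δ ^ 2 / 2 := by
    intro k
    have h := hsmooth (z k) (z (k + 1))
    set g := L' (z k)
    set d := δseq k
    have hdiff : z (k + 1) - z k = -(α • (g + d)) := by
      rw [hstep k]; abel
    rw [hdiff] at h
    have h1 : (inner ℝ g (-(α • (g + d))) : ℝ)
        = -(α * (‖g‖ ^ 2 + inner ℝ g d)) := by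
      rw [inner_neg_right, real_inner_smul_right, inner_add_right,
        real_inner_self_eq_norm_sq]
    have h2 : ‖-(α • (g + d))‖ ^ 2 = α ^ 2 * ‖g + d‖ ^ 2 := by
      rw [norm_neg, norm_smul, mul_pow, Real.norm_eq_abs, sq_abs]
    have h3 : ‖g + d‖ ^ 2 = ‖g‖ ^ 2 + 2 * inner ℝ g d + ‖d‖ ^ 2 :=
      norm_add_sq_real g d
    rw [h1, h2, h3] at h
    have hPLk := hPL (z k)
    have hdδ : ‖d‖ ^ 2 ≤ δ ^ 2 := by
      have := hδseq k
      nlinarith [norm_nonneg d]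
    have hgd : ‖g + d‖ ^ 2 ≥ 0 := sq_nonneg _
    rw [h3] at hgd
    -- ℓ/2 * α² * (stuff) ≤ α/2 * (stuff)
    have key : ℓ / 2 * (α ^ 2 * (‖g‖ ^ 2 + 2 * inner ℝ g d + ‖d‖ ^ 2))
        ≤ α / 2 * (‖g‖ ^ 2 + 2 * inner ℝ g d + ‖d‖ ^ 2) := by
      nlinarith [mul_le_mul_of_nonneg_right hαℓ' (mul_nonneg hα.le hgd)]
    nlinarith [hinf (z k)]
  intro K
  induction K with
  | zero =>
    simp only [pow_zero, one_mul]
    have : (0:ℝ) ≤ δ ^ 2 / (2 * μ) := by positivity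
    linarith
  | succ K ih =>
    have h := step K
    have hmul : (1 - α * μ) * (L (z K) - Lstar) ≤
        (1 - α * μ) * ((1 - α * μ) ^ K * (L (z 0) - Lstar) + δ ^ 2 / (2 * μ)) :=
      mul_le_mul_of_nonneg_left ih hαμ
    have hδμ : (1 - α * μ) * (δ ^ 2 / (2 * μ)) + α * δ ^ 2 / 2 = δ ^ 2 / (2 * μ) := by
      field_simp
      ring
    calc L (z (K + 1)) - Lstar ≤ (1 - α * μ) * (L (z K) - Lstar) + α * δ ^ 2 / 2 := h
    _ ≤ (1 - α * μ) * ((1 - α * μ) ^ K * (L (z 0) - Lstar) + δ ^ 2 / (2 * μ))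
        + α * δ ^ 2 / 2 := by linarith
    _ = (1 - α * μ) ^ (K + 1) * (L (z 0) - Lstar) + δ ^ 2 / (2 * μ) := by
        linear_combination hδμ
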